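/- Let X̄ be the space of ρ-paths from a basepoint in a length space X with the metric d(c₁,c₂)=L(c₁)+L(c₂)−2L(c₁∧c₂). Then X̄ is a geodesic metric space: any two points c₁,c₂ ∈ X̄ are joined by a geodesic obtained by first truncating c₁ down to the common initial segment c₁∧c₂ and then extending along c₂. -/
import Mathlib


open Set

/-- An arclength-parameterized weakly normal rectifiable path (ρ-path) in a metric
space `X`.  The path is defined on `[0, len]`, extended constantly outside. -/
structure RPath (X : Type*) [MetricSpace X] where
  /-- the length of the path -/
  len : ℝ
  len_nonneg : 0 ≤ len
  toFun : ℝ → X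
  contOn : ContinuousOn toFun (Icc 0 len)
  /-- arclength parameterization: the length of the restriction to `[s,t]` is `t - s`. -/
  arclength : ∀ s t : ℝ, 0 ≤ s → s ≤ t → t ≤ len →
    eVariationOn toFun (Icc s t) = ENNReal.ofReal (t - s)
  clamp_left : ∀ t : ℝ, t ≤ 0 → toFun t = toFun 0
  clamp_right : ∀ t : ℝ, len ≤ t → toFun t = toFun len
  /-- weak normality: no nontrivial subsegment `[u,v]` with equal endpoints is
  null-homotopic in its own image rel endpoints. -/
  weaklyNormal : ¬ ∃ u v : ℝ, 0 ≤ u ∧ u < v ∧ v ≤ len ∧ toFun u = toFun v ∧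
    ∃ H : ℝ × ℝ → X, ContinuousOn H (Icc u v ×ˢ Icc 0 1) ∧
      (∀ t ∈ Icc u v, H (t, 0) = toFun t) ∧
      (∀ t ∈ Icc u v, H (t, 1) = toFun u) ∧
      (∀ s ∈ Icc (0:ℝ) 1, H (u, s) = toFun u ∧ H (v, s) = toFun v) ∧
      (∀ p ∈ Icc u v ×ˢ Icc (0:ℝ) 1, H p ∈ toFun '' Icc u v)

namespace RPath

variable {X : Type*} [MetricSpace X]

/-- `c` starts at the point `p`. -/
def StartsAt (c : RPath X) (p : X) : Prop := c.toFun 0 = p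

/-- `c` ends at the point `p`. -/
def EndsAt (c : RPath X) (p : X) : Prop := c.toFun c.len = p

/-- The length `L(c₁ ∧ c₂)` of the longest common initial segment of two paths. -/
noncomputable def wedgeLen (c₁ c₂ : RPath X) : ℝ :=
  sSup {b : ℝ | 0 ≤ b ∧ b ≤ c₁.len ∧ b ≤ c₂.len ∧ ∀ t ∈ Icc 0 b, c₁.toFun t = c₂.toFun t}

/-- The distance `d(c₁,c₂) = L(c₁) + L(c₂) - 2 L(c₁ ∧ c₂)`. -/
noncomputable def rhoDist (c₁ c₂ : RPath X) : ℝ :=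
  c₁.len + c₂.len - 2 * wedgeLen c₁ c₂

end RPath

/-- A length space: a metric space with at least two points in which any two points
are joined by paths of length arbitrarily close to the distance between them. -/
def IsLengthSpace (X : Type*) [MetricSpace X] : Prop :=
  (∃ x y : X, x ≠ y) ∧
  ∀ x y : X, ∀ ε : ℝ, 0 < ε → ∃ (c : ℝ → X) (b : ℝ), 0 ≤ b ∧
    ContinuousOn c (Icc 0 b) ∧ c 0 = x ∧ c b = y ∧
    eVariationOn c (Icc 0 b) < ENNReal.ofReal (dist x y + ε)

namespace RPath

variable {X : Type*} [MetricSpace X]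

lemma ext' {c d : RPath X} (hl : c.len = d.len) (hf : c.toFun = d.toFun) : c = d := by
  cases c; cases d; simp_all

/-- Truncation of a path to length `a` (clamped to `[0, c.len]`). -/
noncomputable def trunc (c : RPath X) (a : ℝ) : RPath X where
  len := max 0 (min a c.len)
  len_nonneg := le_max_left _ _
  toFun := fun t => c.toFun (min t (max 0 (min a c.len)))
  contOn := by
    have hA1 : max 0 (min a c.len) ≤ c.len := max_le c.len_nonneg (min_le_right _ _)
    apply ContinuousOn.congr (f := c.toFun)
    · exact c.contOn.mono (Icc_subset_Icc le_rfl hA1)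
    · intro t ht
      show c.toFun (min t (max 0 (min a c.len))) = c.toFun t
      rw [min_eq_left ht.2]
  arclength := by
    intro s t hs hst ht
    have hA1 : max 0 (min a c.len) ≤ c.len := max_le c.len_nonneg (min_le_right _ _)
    rw [eVariationOn.eq_of_eqOn (f' := c.toFun) (fun u hu => by
      show c.toFun (min u (max 0 (min a c.len))) = c.toFun u
      rw [min_eq_left (hu.2.trans ht)])]
    exact c.arclength s t hs hst (ht.trans hA1)
  clamp_left := by
    intro t ht
    have hA0 : (0:ℝ) ≤ max 0 (min a c.len) := le_max_left _ _
    show c.toFun (min t (max 0 (min a c.len))) = c.toFun (min 0 (max 0 (min a c.len)))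
    rw [min_eq_left (ht.trans hA0), min_eq_left hA0]
    exact c.clamp_left t ht
  clamp_right := by
    intro t ht
    show c.toFun (min t (max 0 (min a c.len))) = c.toFun (min (max 0 (min a c.len)) (max 0 (min a c.len)))
    rw [min_eq_right ht, min_self]
  weaklyNormal := by
    rintro ⟨u, v, hu, huv, hv, heq, H, Hcont, H0, H1, Hends, Himg⟩
    have hA1 : max 0 (min a c.len) ≤ c.len := max_le c.len_nonneg (min_le_right _ _)
    have hagree : ∀ t ∈ Icc u v, c.toFun (min t (max 0 (min a c.len))) = c.toFun t := by
      intro t ht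
      rw [min_eq_left (ht.2.trans hv)]
    apply c.weaklyNormal
    refine ⟨u, v, hu, huv, hv.trans hA1, ?_, H, Hcont, ?_, ?_, ?_, ?_⟩
    · rw [← hagree u ⟨le_rfl, huv.le⟩, ← hagree v ⟨huv.le, le_rfl⟩]; exact heq
    · intro t ht; rw [H0 t ht]; exact hagree t ht
    · intro t ht; rw [H1 t ht]; exact hagree u ⟨le_rfl, huv.le⟩
    · intro s hs
      obtain ⟨e1, e2⟩ := Hends s hs
      rw [e1, e2]
      exact ⟨hagree u ⟨le_rfl, huv.le⟩, hagree v ⟨huv.le, le_rfl⟩⟩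
    · intro p hp
      have := Himg p hp
      rwa [image_congr hagree] at this

variable {c c₁ c₂ : RPath X} {a b : ℝ}

lemma trunc_len (h0 : 0 ≤ a) (h1 : a ≤ c.len) : (c.trunc a).len = a := by
  simp [trunc, min_eq_left h1, max_eq_right h0]

lemma trunc_toFun (t : ℝ) :
    (c.trunc a).toFun t = c.toFun (min t (max 0 (min a c.len))) := rfl

lemma trunc_toFun_of_mem (h0 : 0 ≤ a) (h1 : a ≤ c.len) {t : ℝ} (ht : t ∈ Icc 0 a) :
    (c.trunc a).toFun t = c.toFun t := by
  have hA : max 0 (min a c.len) = a := by rw [min_eq_left h1, max_eq_right h0]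
  rw [trunc_toFun, hA, min_eq_left ht.2]


section Wedge

lemma wedgeSet_nonempty (h0 : c₁.toFun 0 = c₂.toFun 0) :
    (0:ℝ) ∈ {b : ℝ | 0 ≤ b ∧ b ≤ c₁.len ∧ b ≤ c₂.len ∧
      ∀ t ∈ Icc 0 b, c₁.toFun t = c₂.toFun t} := by
  refine ⟨le_rfl, c₁.len_nonneg, c₂.len_nonneg, ?_⟩
  intro t ht
  obtain rfl : t = 0 := le_antisymm ht.2 ht.1
  exact h0

lemma wedgeSet_bddAbove :
    BddAbove {b : ℝ | 0 ≤ b ∧ b ≤ c₁.len ∧ b ≤ c₂.len ∧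
      ∀ t ∈ Icc 0 b, c₁.toFun t = c₂.toFun t} :=
  ⟨c₁.len, fun _ hx => hx.2.1⟩

variable (h0 : c₁.toFun 0 = c₂.toFun 0)
include h0

lemma wedgeLen_nonneg : 0 ≤ wedgeLen c₁ c₂ :=
  le_csSup wedgeSet_bddAbove (wedgeSet_nonempty h0)

lemma wedgeLen_le_left : wedgeLen c₁ c₂ ≤ c₁.len :=
  csSup_le ⟨0, wedgeSet_nonempty h0⟩ fun _ hx => hx.2.1

lemma wedgeLen_le_right : wedgeLen c₁ c₂ ≤ c₂.len :=
  csSup_le ⟨0, wedgeSet_nonempty h0⟩ fun _ hx => hx.2.2.1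

omit h0 in
lemma le_wedgeLen {x : ℝ} (hx : 0 ≤ x) (hx1 : x ≤ c₁.len) (hx2 : x ≤ c₂.len)
    (hag : ∀ t ∈ Icc 0 x, c₁.toFun t = c₂.toFun t) : x ≤ wedgeLen c₁ c₂ :=
  le_csSup wedgeSet_bddAbove ⟨hx, hx1, hx2, hag⟩

lemma wedgeLen_agree : ∀ t ∈ Icc 0 (wedgeLen c₁ c₂), c₁.toFun t = c₂.toFun t := by
  have hlt : ∀ u, 0 ≤ u → u < wedgeLen c₁ c₂ → c₁.toFun u = c₂.toFun u := by
    intro u hu hult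
    obtain ⟨b, hb, hub⟩ := exists_lt_of_lt_csSup ⟨0, wedgeSet_nonempty h0⟩ hult
    exact hb.2.2.2 u ⟨hu, hub.le⟩
  intro t ht
  rcases lt_or_eq_of_le ht.2 with hlt' | heqw
  · exact hlt t ht.1 hlt'
  rcases eq_or_lt_of_le ht.1 with heq | hpos
  · rw [← heq]; exact h0
  -- t = w > 0 : continuity argument
  have hw1 : t ≤ c₁.len := heqw ▸ wedgeLen_le_left h0
  have hw2 : t ≤ c₂.len := heqw ▸ wedgeLen_le_right h0
  have hcl : t ∈ closure (Ico (0:ℝ) t) := by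
    rw [closure_Ico (ne_of_lt hpos)]
    exact ⟨le_of_lt hpos, le_rfl⟩
  haveI : (nhdsWithin t (Ico (0:ℝ) t)).NeBot := mem_closure_iff_nhdsWithin_neBot.mp hcl
  have h1 : Filter.Tendsto c₁.toFun (nhdsWithin t (Ico 0 t)) (nhds (c₁.toFun t)) :=
    (c₁.contOn t ⟨le_of_lt hpos, hw1⟩).mono
      (fun u hu => ⟨hu.1, hu.2.le.trans hw1⟩) |>.tendsto
  have h2 : Filter.Tendsto c₂.toFun (nhdsWithin t (Ico 0 t)) (nhds (c₂.toFun t)) :=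
    (c₂.contOn t ⟨le_of_lt hpos, hw2⟩).mono
      (fun u hu => ⟨hu.1, hu.2.le.trans hw2⟩) |>.tendsto
  have h1' : Filter.Tendsto c₂.toFun (nhdsWithin t (Ico 0 t)) (nhds (c₁.toFun t)) := by
    refine h1.congr' ?_
    filter_upwards [self_mem_nhdsWithin] with u hu
    exact hlt u hu.1 (heqw ▸ hu.2)
  exact tendsto_nhds_unique h1' h2

end Wedge

lemma wedgeLen_comm (c₁ c₂ : RPath X) : wedgeLen c₁ c₂ = wedgeLen c₂ c₁ := by
  unfold wedgeLen
  congr 1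
  ext x
  constructor <;> rintro ⟨h1, h2, h3, h4⟩ <;>
    exact ⟨h1, h3, h2, fun t ht => (h4 t ht).symm⟩

lemma rhoDist_comm (c₁ c₂ : RPath X) : rhoDist c₁ c₂ = rhoDist c₂ c₁ := by
  unfold rhoDist
  rw [wedgeLen_comm]
  ring

lemma wedgeLen_trunc_trunc (c : RPath X) {a b : ℝ} (ha0 : 0 ≤ a) (ha1 : a ≤ c.len)
    (hb0 : 0 ≤ b) (hb1 : b ≤ c.len) :
    wedgeLen (c.trunc a) (c.trunc b) = min a b := by
  unfold wedgeLen
  have : {x : ℝ | 0 ≤ x ∧ x ≤ (c.trunc a).len ∧ x ≤ (c.trunc b).len ∧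
      ∀ t ∈ Icc 0 x, (c.trunc a).toFun t = (c.trunc b).toFun t} = Icc 0 (min a b) := by
    ext x
    simp only [mem_setOf_eq, trunc_len ha0 ha1, trunc_len hb0 hb1, mem_Icc, le_min_iff]
    constructor
    · rintro ⟨h1, h2, h3, _⟩; exact ⟨h1, h2, h3⟩
    · rintro ⟨h1, h2, h3⟩
      refine ⟨h1, h2, h3, fun t ht => ?_⟩
      rw [trunc_toFun_of_mem ha0 ha1 ⟨ht.1, ht.2.trans h2⟩,
        trunc_toFun_of_mem hb0 hb1 ⟨ht.1, ht.2.trans h3⟩]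
  rw [this, csSup_Icc (le_min ha0 hb0)]

lemma wedgeLen_trunc_mixed {c₁ c₂ : RPath X} (h0 : c₁.toFun 0 = c₂.toFun 0)
    {a b : ℝ} (ha0 : wedgeLen c₁ c₂ ≤ a) (ha1 : a ≤ c₁.len)
    (hb0 : wedgeLen c₁ c₂ ≤ b) (hb1 : b ≤ c₂.len) :
    wedgeLen (c₁.trunc a) (c₂.trunc b) = wedgeLen c₁ c₂ := by
  set w := wedgeLen c₁ c₂ with hwdef
  have hw0 : 0 ≤ w := wedgeLen_nonneg h0
  have haa : 0 ≤ a := hw0.trans ha0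
  have hbb : 0 ≤ b := hw0.trans hb0
  apply IsGreatest.csSup_eq
  constructor
  · refine ⟨hw0, ?_, ?_, fun t ht => ?_⟩
    · rw [trunc_len haa ha1]; exact ha0
    · rw [trunc_len hbb hb1]; exact hb0
    · rw [trunc_toFun_of_mem haa ha1 ⟨ht.1, ht.2.trans ha0⟩,
        trunc_toFun_of_mem hbb hb1 ⟨ht.1, ht.2.trans hb0⟩]
      exact wedgeLen_agree h0 t ht
  · rintro x ⟨hx0, hxa, hxb, hag⟩
    rw [trunc_len haa ha1] at hxa
    rw [trunc_len hbb hb1] at hxb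
    refine le_wedgeLen hx0 (hxa.trans ha1) (hxb.trans hb1) fun t ht => ?_
    have := hag t ht
    rwa [trunc_toFun_of_mem haa ha1 ⟨ht.1, ht.2.trans hxa⟩,
      trunc_toFun_of_mem hbb hb1 ⟨ht.1, ht.2.trans hxb⟩] at this

lemma trunc_eq_of_agree {c d : RPath X} {a : ℝ} (hl : d.len = a) (ha : a ≤ c.len)
    (hag : ∀ t ∈ Icc 0 a, c.toFun t = d.toFun t) : c.trunc a = d := by
  have h0 : 0 ≤ a := hl ▸ d.len_nonneg
  apply ext'
  · rw [trunc_len h0 ha, hl]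
  · funext t
    rcases le_total t a with hta | hat
    · rcases le_total 0 t with ht0 | ht0
      · rw [trunc_toFun_of_mem h0 ha ⟨ht0, hta⟩]
        exact hag t ⟨ht0, hta⟩
      · have hA : max 0 (min a c.len) = a := by rw [min_eq_left ha, max_eq_right h0]
        rw [trunc_toFun, hA, min_eq_left (hta)]
        rw [c.clamp_left t ht0, d.clamp_left t ht0]
        exact hag 0 ⟨le_rfl, h0⟩
    · have hA : max 0 (min a c.len) = a := by rw [min_eq_left ha, max_eq_right h0]
      rw [trunc_toFun, hA, min_eq_right hat]
      rw [d.clamp_right t (hl ▸ hat), hl]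
      exact hag a ⟨h0, le_rfl⟩

lemma trunc_self (c : RPath X) : c.trunc c.len = c :=
  trunc_eq_of_agree rfl le_rfl (fun _ _ => rfl)

lemma trunc_toFun_zero {c : RPath X} {a : ℝ} : (c.trunc a).toFun 0 = c.toFun 0 := by
  rw [trunc_toFun, min_eq_left (le_max_left _ _)]

end RPath

/-- The space `X̄` of ρ-paths from the basepoint of a length space,
with the metric `d(c₁,c₂) = L(c₁)+L(c₂)-2L(c₁∧c₂)`, is a geodesic space: any two
points `c₁, c₂` are joined by a geodesic `γ` obtained by first truncating `c₁` down to
the common initial segment `c₁ ∧ c₂` and then extending along `c₂`. -/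
theorem rhoPathSpace_geodesic {X : Type*} [MetricSpace X] (hX : IsLengthSpace X)
    (base : X) (c₁ c₂ : RPath X) (h₁ : c₁.StartsAt base) (h₂ : c₂.StartsAt base) :
    ∃ γ : ℝ → RPath X,
      (∀ s ∈ Icc 0 (RPath.rhoDist c₁ c₂), (γ s).StartsAt base) ∧
      γ 0 = c₁ ∧ γ (RPath.rhoDist c₁ c₂) = c₂ ∧
      -- `γ` is a geodesic
      (∀ s ∈ Icc 0 (RPath.rhoDist c₁ c₂), ∀ t ∈ Icc 0 (RPath.rhoDist c₁ c₂),
        RPath.rhoDist (γ s) (γ t) = |s - t|) ∧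
      -- first `γ` truncates `c₁` down to `c₁ ∧ c₂` ...
      (∀ s ∈ Icc 0 (c₁.len - RPath.wedgeLen c₁ c₂),
        (γ s).len = c₁.len - s ∧ ∀ t ∈ Icc 0 (γ s).len, (γ s).toFun t = c₁.toFun t) ∧
      -- ... and then extends along `c₂`
      (∀ s ∈ Icc (c₁.len - RPath.wedgeLen c₁ c₂) (RPath.rhoDist c₁ c₂),
        (γ s).len = s - c₁.len + 2 * RPath.wedgeLen c₁ c₂ ∧
        ∀ t ∈ Icc 0 (γ s).len, (γ s).toFun t = c₂.toFun t) := by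
  classical
  have h0 : c₁.toFun 0 = c₂.toFun 0 := h₁.trans h₂.symm
  set w := RPath.wedgeLen c₁ c₂ with hwdef
  have hw0 : 0 ≤ w := RPath.wedgeLen_nonneg h0
  have hw1 : w ≤ c₁.len := RPath.wedgeLen_le_left h0
  have hw2 : w ≤ c₂.len := RPath.wedgeLen_le_right h0
  have hag : ∀ t ∈ Icc 0 w, c₁.toFun t = c₂.toFun t := RPath.wedgeLen_agree h0
  set D := RPath.rhoDist c₁ c₂ with hDdef
  have hD : D = c₁.len + c₂.len - 2 * w := rfl
  refine ⟨fun s => if s ≤ c₁.len - w then c₁.trunc (c₁.len - s)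
    else c₂.trunc (s - c₁.len + 2 * w), ?_, ?_, ?_, ?_, ?_, ?_⟩
  · -- starts at base
    intro s _
    show RPath.StartsAt _ base
    unfold RPath.StartsAt
    beta_reduce
    split
    · rw [RPath.trunc_toFun_zero]; exact h₁
    · rw [RPath.trunc_toFun_zero]; exact h₂
  · -- γ 0 = c₁
    show (if (0:ℝ) ≤ c₁.len - w then _ else _) = c₁
    rw [if_pos (by linarith), sub_zero, RPath.trunc_self]
  · -- γ D = c₂
    show (if D ≤ c₁.len - w then c₁.trunc (c₁.len - D) else c₂.trunc (D - c₁.len + 2 * w)) = c₂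
    by_cases hc : D ≤ c₁.len - w
    · have hlen2 : c₂.len = w := le_antisymm (by linarith) hw2
      have harg : c₁.len - D = w := by rw [hD]; linarith
      rw [if_pos hc, harg]
      exact RPath.trunc_eq_of_agree hlen2 hw1 hag
    · have harg : D - c₁.len + 2 * w = c₂.len := by rw [hD]; ring
      rw [if_neg hc, harg, RPath.trunc_self]
  · -- geodesic
    have key : ∀ s ∈ Icc 0 D, ∀ t ∈ Icc 0 D, s ≤ t →
        RPath.rhoDist (if s ≤ c₁.len - w then c₁.trunc (c₁.len - s)
            else c₂.trunc (s - c₁.len + 2 * w))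
          (if t ≤ c₁.len - w then c₁.trunc (c₁.len - t)
            else c₂.trunc (t - c₁.len + 2 * w)) = t - s := by
      intro s hs t ht hst
      rw [hD, Set.mem_Icc] at hs ht
      obtain ⟨hs0, hsD⟩ := hs
      obtain ⟨ht0, htD⟩ := ht
      by_cases h1' : s ≤ c₁.len - w <;> by_cases h2' : t ≤ c₁.len - w
      · rw [if_pos h1', if_pos h2']
        unfold RPath.rhoDist
        rw [RPath.wedgeLen_trunc_trunc c₁ (by linarith) (by linarith) (by linarith) (by linarith),
          RPath.trunc_len (by linarith) (by linarith),
          RPath.trunc_len (by linarith) (by linarith),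
          min_eq_right (by linarith)]
        ring
      · rw [if_pos h1', if_neg h2']
        unfold RPath.rhoDist
        rw [RPath.wedgeLen_trunc_mixed h0 (by linarith) (by linarith) (by linarith) (by linarith),
          RPath.trunc_len (by linarith) (by linarith),
          RPath.trunc_len (by linarith) (by linarith)]
        rw [← hwdef]
        ring
      · exact absurd (hst.trans h2') h1'
      · rw [if_neg h1', if_neg h2']
        unfold RPath.rhoDist
        rw [RPath.wedgeLen_trunc_trunc c₂ (by linarith) (by linarith) (by linarith) (by linarith),
          RPath.trunc_len (by linarith) (by linarith),
          RPath.trunc_len (by linarith) (by linarith),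
          min_eq_left (by linarith)]
        ring
    intro s hs t ht
    rcases le_total s t with h | h
    · rw [key s hs t ht h, abs_of_nonpos (by linarith)]; ring
    · rw [RPath.rhoDist_comm, key t ht s hs h, abs_of_nonneg (by linarith)]
  · -- truncation part
    intro s hs
    beta_reduce
    rw [if_pos hs.2]
    have hlen : (c₁.trunc (c₁.len - s)).len = c₁.len - s :=
      RPath.trunc_len (by have := hs.2; linarith) (by have := hs.1; linarith)
    refine ⟨hlen, ?_⟩
    intro t ht
    rw [hlen] at ht
    exact RPath.trunc_toFun_of_mem (by have := hs.2; linarith) (by have := hs.1; linarith) ht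
  · -- extension part
    intro s hs
    beta_reduce
    have hsD : s ≤ D := hs.2
    rw [hD] at hsD
    by_cases hc : s ≤ c₁.len - w
    · have hseq : s = c₁.len - w := le_antisymm hc hs.1
      rw [if_pos hc]
      have harg : c₁.len - s = w := by rw [hseq]; ring
      rw [harg]
      have hlen : (c₁.trunc w).len = w := RPath.trunc_len hw0 hw1
      have hlen' : (c₁.trunc w).len = s - c₁.len + 2 * w := by rw [hlen, hseq]; ring
      refine ⟨hlen', ?_⟩
      intro t ht
      rw [hlen'] at ht
      have ht' : t ∈ Icc 0 w := by
        constructor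
        · exact ht.1
        · have := ht.2; rw [hseq] at this; linarith
      rw [RPath.trunc_toFun_of_mem hw0 hw1 ht']
      exact hag t ht'
    · rw [if_neg hc]
      have hb0 : 0 ≤ s - c₁.len + 2 * w := by push_neg at hc; linarith
      have hb1 : s - c₁.len + 2 * w ≤ c₂.len := by linarith
      have hlen : (c₂.trunc (s - c₁.len + 2 * w)).len = s - c₁.len + 2 * w :=
        RPath.trunc_len hb0 hb1
      refine ⟨hlen, ?_⟩
      intro t ht
      rw [hlen] at ht
      exact RPath.trunc_toFun_of_mem hb0 hb1 ht
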